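/- Let z, A, B, N₀ > 0 with z < A/(N₀ ln 2). Then the unique solution t > 0 of z = t·B·log₂(1 + A/(t·B·N₀)) is given by t = −z·ln(2)·A / (B·(z·N₀·ln 2 + W₋₁(b)·A)), where b = −2^{−z·N₀/A}·z·N₀·ln(2)/A and W₋₁ denotes the lower branch of the Lambert W function. -/

import Mathlib

/-- Closed-form solution via the lower branch `W₋₁` of the Lambert W function,
characterized by `w * exp w = b` with `w ≤ -1`. -/
theorem closed_form_solution_lambertW (z A B N₀ : ℝ) (hz : 0 < z) (hA : 0 < A)
    (hB : 0 < B) (hN₀ : 0 < N₀) (hfeas : z < A / (N₀ * Real.log 2))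
    (b : ℝ) (hb : b = -(2 : ℝ) ^ (-(z * N₀) / A) * z * N₀ * Real.log 2 / A)
    (w : ℝ) (hw_branch : w ≤ -1) (hw : w * Real.exp w = b) :
    let t := -(z * Real.log 2 * A) / (B * (z * N₀ * Real.log 2 + w * A))
    0 < t ∧ z = t * B * Real.logb 2 (1 + A / (t * B * N₀)) := by
  intro t
  have hL : 0 < Real.log 2 := Real.log_pos (by norm_num)
  set L := Real.log 2 with hLdef
  have hkey : z * N₀ * L < A := by
    have := (lt_div_iff₀ (by positivity : 0 < N₀ * L)).mp hfeas
    nlinarith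
  set c : ℝ := z * N₀ * L / A with hc
  have hc0 : 0 < c := by positivity
  have hD : z * N₀ * L + w * A < 0 := by nlinarith
  have hDne : z * N₀ * L + w * A ≠ 0 := ne_of_lt hD
  have harg : L * (-(z * N₀) / A) = -c := by
    rw [hc]; field_simp
  have hb' : b = -Real.exp (-c) * c := by
    rw [hb, Real.rpow_def_of_pos (by norm_num : (0:ℝ) < 2), ← hLdef, harg, hc]
    field_simp
  have hw2 : w * Real.exp w = -Real.exp (-c) * c := hw.trans hb'
  have hew : Real.exp w ≠ 0 := Real.exp_ne_zero w
  have hecw : Real.exp (-(c + w)) = Real.exp (-c) / Real.exp w := by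
    rw [← Real.exp_sub]; ring_nf
  have hmw : -w = c * Real.exp (-(c + w)) := by
    rw [hecw]
    field_simp
    nlinarith [hw2]
  have h1 : -w * A / (z * L * N₀) = Real.exp (-(c + w)) := by
    rw [hmw, hc]
    field_simp
  have hlog : Real.log (-w * A / (z * L * N₀)) = -(c + w) := by
    rw [h1, Real.log_exp]
  have ht : 0 < t := by
    have hnum : -(z * L * A) < 0 := by
      have h0 : 0 < z * L * A := by positivity
      linarith
    have hden : B * (z * N₀ * L + w * A) < 0 := by nlinarith
    exact div_pos_of_neg_of_neg hnum hden
  refine ⟨ht, ?_⟩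
  have hBne : B ≠ 0 := ne_of_gt hB
  have htB : t * B = -(z * L * A) / (z * N₀ * L + w * A) := by
    show -(z * L * A) / (B * (z * N₀ * L + w * A)) * B = _
    field_simp
  have hargeq : 1 + A / (t * B * N₀) = -w * A / (z * L * N₀) := by
    rw [htB]
    field_simp
    ring
  rw [show t * B * Real.logb 2 (1 + A / (t * B * N₀))
      = t * B * Real.logb 2 (1 + A / (t * B * N₀)) from rfl]
  rw [hargeq, Real.logb, ← hLdef, hlog, htB, hc]
  field_simp
  ring_nf
  rw [← add_mul, mul_inv_cancel₀ (by intro h; apply hDne; linarith)]
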